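/- Let B₁, B₂ be as in the base-factoring setting: B₂ obtained from B₁ = ⟨r₀,…,r_{k−1}⟩ by merging positions p and p+1 into r_p·r_{p+1}. Then for every natural number v, the digit of v in B₂ at position p equals d_p + d_{p+1}·r_p, where d_p, d_{p+1} are the digits of v in B₁ at positions p and p+1. -/

import Mathlib

/-- The weight of digit position `i` in mixed radix base `B`: product of the first `i` radices. -/
def weight (B : List ℕ) (i : ℕ) : ℕ := (B.take i).prod

/-- The `i`-th digit of `v` in mixed radix base `B` (the most significant digit, at
position `B.length`, is `v / B.prod` and is unbounded). -/
def digit (B : List ℕ) (v i : ℕ) : ℕ :=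
  if i < B.length then (v / weight B i) % B.getD i 1 else v / B.prod

/-- The sum of the digits of `v` in base `B`. -/
def digitSum (B : List ℕ) (v : ℕ) : ℕ :=
  ∑ i ∈ Finset.range (B.length + 1), digit B v i

/-- The sum of digits of all elements of the multiset `S` in base `B`. -/
def sumDigits (S : Multiset ℕ) (B : List ℕ) : ℕ :=
  (S.map (digitSum B)).sum

theorem stmt4 (P Q : List ℕ) (r s : ℕ) (hr : 2 ≤ r) (hs : 2 ≤ s)
    (hP : ∀ x ∈ P, 2 ≤ x) (hQ : ∀ x ∈ Q, 2 ≤ x) (v : ℕ) :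
    digit (P ++ (r * s) :: Q) v P.length =
      digit (P ++ r :: s :: Q) v P.length +
        digit (P ++ r :: s :: Q) v (P.length + 1) * r := by
  have h1 : P.length < (P ++ (r * s) :: Q).length := by simp
  have h2 : P.length < (P ++ r :: s :: Q).length := by simp
  have h3 : P.length + 1 < (P ++ r :: s :: Q).length := by simp
  have ht1 : (P ++ (r * s) :: Q).take P.length = P := List.take_left
  have ht2 : (P ++ r :: s :: Q).take P.length = P := List.take_left
  have ht3 : (P ++ r :: s :: Q).take (P.length + 1) = P ++ [r] := by
    rw [List.take_append]
    simp
  have hg1 : (P ++ (r * s) :: Q).getD P.length 1 = r * s := by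
    simp [List.getD, List.getElem?_append_right (le_refl P.length)]
  have hg2 : (P ++ r :: s :: Q).getD P.length 1 = r := by
    simp [List.getD, List.getElem?_append_right (le_refl P.length)]
  have hg3 : (P ++ r :: s :: Q).getD (P.length + 1) 1 = s := by
    simp [List.getD, List.getElem?_append_right (Nat.le_succ P.length)]
  simp only [digit, weight, h1, h2, h3, if_pos, ht1, ht2, ht3, hg1, hg2, hg3,
    List.prod_append, List.prod_cons, List.prod_nil, mul_one]
  rw [Nat.mod_mul, Nat.div_div_eq_div_mul]
  ring
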